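/- arXiv:2510.07725 — 2 statements merged into one kernel-verified Lean document; each statement's English description precedes it below -/
import Mathlib

section
/- Let c: ℝ × ℝ → ℝ be Lipschitz in its second argument with constant L > 0. Let z' : ℝ be fixed, let Z : Ω → ℝ be a random variable on a probability space, let C > 0 and δ ∈ (0,1). If ℙ(|Z - z'| ≤ C) ≥ 1 - δ and c(z_q, z') ≥ L·C, then ℙ(c(z_q, Z) ≥ 0) ≥ 1 - δ. -/
open MeasureTheory ProbabilityTheory

theorem cp_safe_footstep_probabilistic
    {Ω : Type*} [MeasureSpace Ω] [IsProbabilityMeasure (ℙ : Measure Ω)]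
    (c : ℝ × ℝ → ℝ) (L : ℝ) (hL : 0 < L)
    (hLip : ∀ a x y : ℝ, |c (a, x) - c (a, y)| ≤ L * |x - y|)
    (z_q z' : ℝ) (Z : Ω → ℝ) (C δ : ℝ) (hC : 0 < C) (hδ : δ ∈ Set.Ioo (0:ℝ) 1)
    (hcov : ℙ {ω | |Z ω - z'| ≤ C} ≥ ENNReal.ofReal (1 - δ))
    (hcons : c (z_q, z') ≥ L * C) :
    ℙ {ω | c (z_q, Z ω) ≥ 0} ≥ ENNReal.ofReal (1 - δ) := by
  refine le_trans hcov (measure_mono ?_)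
  intro ω hω
  simp only [Set.mem_setOf_eq] at *
  have h1 := hLip z_q (Z ω) z'
  have h2 : L * |Z ω - z'| ≤ L * C := by
    exact mul_le_mul_of_nonneg_left hω hL.le
  have h3 := abs_le.mp (h1.trans h2)
  linarith [h3.1]
end

section
/- Let ω > 0 and consider the LIP dynamics ẍ = ω²(x - u) with initial state (x₀, v₀). If the orbital energy E = v₀²/2 - (ω²/2)(x₀ - u)² is positive and v₀ > 0, then v(t) > 0 for all t ≥ 0 and v(t) ≥ √(2E) for all t ≥ 0. -/
theorem lip_positive_orbital_energy_velocity
    (ω x₀ v₀ u : ℝ) (hω : 0 < ω)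
    (x v : ℝ → ℝ)
    (hx : ∀ t, x t = u + (x₀ - u) * Real.cosh (ω * t) + (v₀ / ω) * Real.sinh (ω * t))
    (hv : ∀ t, v t = ω * (x₀ - u) * Real.sinh (ω * t) + v₀ * Real.cosh (ω * t))
    (E : ℝ) (hE : E = v₀ ^ 2 / 2 - (ω ^ 2 / 2) * (x₀ - u) ^ 2)
    (hEpos : 0 < E) (hv₀ : 0 < v₀) :
    ∀ t : ℝ, 0 ≤ t → 0 < v t ∧ Real.sqrt (2 * E) ≤ v t := by
  intro t ht
  set d := x₀ - u with hd
  have h2E : 2 * E = v₀ ^ 2 - ω ^ 2 * d ^ 2 := by rw [hE]; ring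
  have hlt : ω * |d| < v₀ := by
    nlinarith [abs_nonneg d, sq_abs d, sq_nonneg (ω * |d| - v₀), sq_nonneg (ω * |d| + v₀)]
  have hs : 0 ≤ Real.sinh (ω * t) := Real.sinh_nonneg_iff.2 (by positivity)
  have hc1 : 1 ≤ Real.cosh (ω * t) := Real.one_le_cosh _
  have hid : Real.cosh (ω * t) ^ 2 - Real.sinh (ω * t) ^ 2 = 1 := Real.cosh_sq_sub_sinh_sq _
  have hsc : Real.sinh (ω * t) ≤ Real.cosh (ω * t) := by nlinarith
  have hpos : 0 < v t := by
    rw [hv t]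
    have hdd : -|d| ≤ d := neg_abs_le d
    have h1 : -(ω * |d|) * Real.sinh (ω * t) ≤ ω * d * Real.sinh (ω * t) := by
      have := mul_nonneg hω.le hs
      nlinarith
    have h2 : ω * |d| * Real.sinh (ω * t) ≤ ω * |d| * Real.cosh (ω * t) := by
      have := mul_nonneg hω.le (abs_nonneg d)
      nlinarith
    nlinarith
  refine ⟨hpos, ?_⟩
  have hident : Real.cosh (ω * t) ^ 2 - Real.sinh (ω * t) ^ 2 = 1 :=
    Real.cosh_sq_sub_sinh_sq _
  have hsq : 2 * E ≤ (v t) ^ 2 := by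
    rw [hv t, h2E]
    nlinarith [sq_nonneg (ω * d * Real.cosh (ω * t) + v₀ * Real.sinh (ω * t))]
  calc Real.sqrt (2 * E) ≤ Real.sqrt ((v t) ^ 2) := Real.sqrt_le_sqrt hsq
    _ = |v t| := by rw [Real.sqrt_sq_eq_abs]
    _ = v t := abs_of_pos hpos
end
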